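/- The function x ↦ ψ'(x)·x, where ψ(x) = −log log(1 + e^{−x}), is monotonically increasing on (0, ∞). Equivalently, x ↦ x / ((1 + e^x) log(1 + e^{−x})) is increasing on (0, ∞). -/

import Mathlib

open Real

lemma stmt_3_Lpos (x : ℝ) : 0 < Real.log (1 + Real.exp (-x)) :=
  Real.log_pos (by linarith [Real.exp_pos (-x)])

lemma stmt_3_gpos (x : ℝ) : 0 < (1 + Real.exp x) * Real.log (1 + Real.exp (-x)) :=
  mul_pos (by positivity) (stmt_3_Lpos x)

lemma stmt_3_hasDeriv (x : ℝ) :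
    HasDerivAt (fun x : ℝ => x / ((1 + Real.exp x) * Real.log (1 + Real.exp (-x))))
      (((1 + Real.exp x) * Real.log (1 + Real.exp (-x))
          - x * (Real.exp x * Real.log (1 + Real.exp (-x)) - 1))
        / ((1 + Real.exp x) * Real.log (1 + Real.exp (-x)))^2) x := by
  have h1 : (0:ℝ) < 1 + Real.exp (-x) := by linarith [Real.exp_pos (-x)]
  have he : HasDerivAt (fun x : ℝ => 1 + Real.exp (-x)) (-Real.exp (-x)) x := by
    have := ((Real.hasDerivAt_exp (-x)).comp x (hasDerivAt_neg x)).const_add 1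
    simpa using this
  have hL : HasDerivAt (fun x : ℝ => Real.log (1 + Real.exp (-x)))
      (-Real.exp (-x) / (1 + Real.exp (-x))) x := he.log (ne_of_gt h1)
  have h2 : HasDerivAt (fun x : ℝ => 1 + Real.exp x) (Real.exp x) x :=
    (Real.hasDerivAt_exp x).const_add 1
  have hg : HasDerivAt (fun x : ℝ => (1 + Real.exp x) * Real.log (1 + Real.exp (-x)))
      (Real.exp x * Real.log (1 + Real.exp (-x)) - 1) x := by
    have := h2.fun_mul hL
    refine this.congr_deriv ?_
    have hx1 : Real.exp x * Real.exp (-x) = 1 := by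
      rw [← Real.exp_add]; simp
    have hne : (1 + Real.exp (-x)) ≠ 0 := ne_of_gt h1
    field_simp
    nlinarith [hx1]
  have := (hasDerivAt_id x).fun_div hg (ne_of_gt (stmt_3_gpos x))
  simpa using this

theorem stmt_3 :
    MonotoneOn (fun x : ℝ => x / ((1 + Real.exp x) * Real.log (1 + Real.exp (-x))))
      (Set.Ioi (0 : ℝ)) := by
  have hdiff : ∀ x : ℝ, DifferentiableAt ℝ
      (fun x : ℝ => x / ((1 + Real.exp x) * Real.log (1 + Real.exp (-x)))) x :=
    fun x => (stmt_3_hasDeriv x).differentiableAt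
  apply monotoneOn_of_deriv_nonneg (convex_Ioi 0)
  · exact fun x _ => (hdiff x).continuousAt.continuousWithinAt
  · rw [interior_Ioi]
    exact fun x _ => (hdiff x).differentiableWithinAt
  · rw [interior_Ioi]
    intro x hx
    rw [(stmt_3_hasDeriv x).deriv]
    apply div_nonneg _ (sq_nonneg _)
    set L := Real.log (1 + Real.exp (-x)) with hLdef
    have hLpos : 0 < L := stmt_3_Lpos x
    have ht : 0 < Real.exp (-x) := Real.exp_pos _
    have hx1 : Real.exp x * Real.exp (-x) = 1 := by
      rw [← Real.exp_add]; simp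
    have hLle : L ≤ Real.exp (-x) := by
      have := Real.log_le_sub_one_of_pos (show (0:ℝ) < 1 + Real.exp (-x) by linarith)
      simpa [hLdef] using this
    have hx0 : 0 < x := hx
    -- multiply goal by exp(-x) > 0
    have expand : Real.exp (-x) * ((1 + Real.exp x) * L - x * (Real.exp x * L - 1))
        = (1 + Real.exp (-x)) * L + x * (Real.exp (-x) - L) := by
      linear_combination (L - x * L) * hx1
    have key : 0 ≤ Real.exp (-x) * ((1 + Real.exp x) * L
        - x * (Real.exp x * L - 1)) := by
      rw [expand]
      have h1 := mul_nonneg hx0.le (sub_nonneg.2 hLle)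
      have h2 : 0 ≤ (1 + Real.exp (-x)) * L := by positivity
      linarith
    nlinarith [key, ht]
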